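/- arXiv:1203.0908 — 2 statements merged into one kernel-verified Lean document; each statement's English description precedes it below -/
import Mathlib

section
/- Let d ≥ 2, T > 1, and h_T : ℤ^d → ℝ⁺. Assume there exists R̃ ∼ 1 such that for all R ≥ R̃/2, ∫_{R<|x|≤2R} ∫_{|z|≤|z−x|} h_T(z) h_T(z−x) dz dx ≲ R² max{1, ln(√T/R)} for d = 2 and ≲ R² for d > 2, and ∫_{|x|≤4R̃} ∫_{|z|≤|z−x|} h_T(z) h_T(z−x) dz dx ≲ ln T for d = 2 and ≲ 1 for d > 2. With g_T as in the convolution lemma, then ∫_{√T<|x|} g_T(x) ∫_{|z|≤|z−x|} h_T(z) h_T(z−x) dz dx ≲ √T^{4−d}. -/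
open scoped ENNReal

noncomputable def latNorm {d : ℕ} (z : Fin d → ℤ) : ℝ :=
  ‖(fun i => (z i : ℝ) : Fin d → ℝ)‖

noncomputable def gT (d : ℕ) (T : ℝ) (z : Fin d → ℤ) : ℝ :=
  if d = 2 then
    (if latNorm z ≤ Real.sqrt T then Real.log (Real.sqrt T / (1 + latNorm z))
     else (Real.sqrt T / latNorm z) ^ 3)
  else
    (1 + latNorm z) ^ ((2 : ℝ) - d) *
      (if latNorm z ≤ Real.sqrt T then 1 else (Real.sqrt T / latNorm z) ^ 3)

/-- Far-field part of the convolution estimate: under the dyadic bounds on the (half-)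
convolution of `h_T`, the contribution of the region `|x| > √T` is `≲ √T^{4−d}`. -/
theorem stmt_5 (d : ℕ) (hd : 2 ≤ d) (C₀ Rt : ℝ) (hC₀ : 0 < C₀) (hRt : 1 ≤ Rt) (hRt' : Rt ≤ 2) :
    ∃ C : ℝ, 0 < C ∧ ∀ T : ℝ, 1 < T →
      ∀ h : (Fin d → ℤ) → ℝ, (∀ z, 0 ≤ h z) →
      -- dyadic annulus bound on the half convolution
      (∀ R : ℝ, Rt / 2 ≤ R →
        (∑' x : {x : Fin d → ℤ // R < latNorm x ∧ latNorm x ≤ 2 * R},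
          ∑' z : {z : Fin d → ℤ // latNorm z ≤ latNorm (z - x.1)},
            ENNReal.ofReal (h z.1 * h (z.1 - x.1)))
          ≤ ENNReal.ofReal (C₀ * (if d = 2 then R ^ 2 * max 1 (Real.log (Real.sqrt T / R))
              else R ^ 2))) →
      -- bound near the origin
      (∑' x : {x : Fin d → ℤ // latNorm x ≤ 4 * Rt},
          ∑' z : {z : Fin d → ℤ // latNorm z ≤ latNorm (z - x.1)},
            ENNReal.ofReal (h z.1 * h (z.1 - x.1)))
        ≤ ENNReal.ofReal (C₀ * (if d = 2 then Real.log T else 1)) →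
      (∑' x : {x : Fin d → ℤ // Real.sqrt T < latNorm x},
          ENNReal.ofReal (gT d T x.1) *
            ∑' z : {z : Fin d → ℤ // latNorm z ≤ latNorm (z - x.1)},
              ENNReal.ofReal (h z.1 * h (z.1 - x.1)))
        ≤ ENNReal.ofReal (C * Real.sqrt T ^ ((4 : ℝ) - d)) := by
  refine ⟨2 * C₀, by positivity, ?_⟩
  intro T hT h hh hA _hO
  set S := Real.sqrt T with hSdef
  have hS1 : 1 < S := by
    rw [hSdef, show (1:ℝ) = Real.sqrt 1 by simp]
    exact Real.sqrt_lt_sqrt zero_le_one hT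
  have hS0 : (0:ℝ) < S := lt_trans one_pos hS1
  have hd2R : (2:ℝ) ≤ (d:ℝ) := by exact_mod_cast hd
  -- every point outside the ball of radius S lies in some dyadic annulus
  have key : ∀ x : Fin d → ℤ, S < latNorm x →
      ∃ k : ℕ, 2 ^ k * S < latNorm x ∧ latNorm x ≤ 2 * (2 ^ k * S) := by
    intro x hx
    have hx0 : 0 < latNorm x := lt_trans hS0 hx
    have hu1 : 1 < latNorm x / S := (one_lt_div hS0).mpr hx
    have hu0 : 0 < latNorm x / S := lt_trans one_pos hu1
    set t := Real.logb 2 (latNorm x / S) with ht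
    have ht0 : 0 < t := Real.logb_pos one_lt_two hu1
    have hc : 1 ≤ ⌈t⌉₊ := Nat.one_le_ceil_iff.mpr ht0
    have hcast : ((⌈t⌉₊ - 1 : ℕ) : ℝ) = (⌈t⌉₊ : ℝ) - 1 := by
      rw [Nat.cast_sub hc, Nat.cast_one]
    refine ⟨⌈t⌉₊ - 1, ?_, ?_⟩
    · have h1 : ((⌈t⌉₊ - 1 : ℕ) : ℝ) < t := by
        have := Nat.ceil_lt_add_one ht0.le
        rw [hcast]; linarith
      have h2 : (2:ℝ) ^ (((⌈t⌉₊ - 1 : ℕ):ℕ):ℝ) < latNorm x / S :=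
        (Real.lt_logb_iff_rpow_lt one_lt_two hu0).mp h1
      rw [Real.rpow_natCast] at h2
      calc 2 ^ (⌈t⌉₊ - 1) * S < (latNorm x / S) * S :=
            mul_lt_mul_of_pos_right h2 hS0
        _ = latNorm x := div_mul_cancel₀ _ (ne_of_gt hS0)
    · have h1 : t ≤ ((⌈t⌉₊ - 1 : ℕ):ℝ) + 1 := by
        have := Nat.le_ceil t
        rw [hcast]; linarith
      have h2 : latNorm x / S ≤ (2:ℝ) ^ (((⌈t⌉₊ - 1 : ℕ):ℝ) + 1) :=
        (Real.logb_le_iff_le_rpow one_lt_two hu0).mp h1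
      have h3 : (2:ℝ) ^ (((⌈t⌉₊ - 1 : ℕ):ℝ) + 1) = 2 * 2 ^ (⌈t⌉₊ - 1) := by
        rw [Real.rpow_add two_pos, Real.rpow_one, Real.rpow_natCast]; ring
      rw [h3] at h2
      calc latNorm x = (latNorm x / S) * S := (div_mul_cancel₀ _ (ne_of_gt hS0)).symm
        _ ≤ (2 * 2 ^ (⌈t⌉₊ - 1)) * S := mul_le_mul_of_nonneg_right h2 hS0.le
        _ = 2 * (2 ^ (⌈t⌉₊ - 1) * S) := by ring
  -- bound on each annulus
  have step2 : ∀ k : ℕ,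
      (∑' x : {x : Fin d → ℤ // 2 ^ k * S < latNorm x ∧ latNorm x ≤ 2 * (2 ^ k * S)},
         ENNReal.ofReal (gT d T x.1) *
           ∑' z : {z : Fin d → ℤ // latNorm z ≤ latNorm (z - x.1)},
             ENNReal.ofReal (h z.1 * h (z.1 - x.1)))
      ≤ ENNReal.ofReal (C₀ * S ^ ((4 : ℝ) - d)) * ENNReal.ofReal ((2⁻¹ : ℝ) ^ k) := by
    intro k
    have h2k1 : (1:ℝ) ≤ 2 ^ k := one_le_pow₀ one_le_two
    have h2k0 : (0:ℝ) < 2 ^ k := by positivity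
    have hSR : S ≤ 2 ^ k * S := le_mul_of_one_le_left hS0.le h2k1
    have hR0 : (0:ℝ) < 2 ^ k * S := by positivity
    have hRt2 : Rt / 2 ≤ 2 ^ k * S := by nlinarith
    have hAk := hA (2 ^ k * S) hRt2
    have hSne : S ≠ 0 := ne_of_gt hS0
    have h2ne : (2:ℝ) ^ k ≠ 0 := ne_of_gt h2k0
    by_cases hd2 : d = 2
    · subst hd2
      rw [if_pos rfl] at hAk
      have hgb : ∀ x : {x : Fin 2 → ℤ // 2 ^ k * S < latNorm x ∧ latNorm x ≤ 2 * (2 ^ k * S)},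
          gT 2 T x.1 ≤ (S / (2 ^ k * S)) ^ 3 := by
        intro x
        have hx1 : 2 ^ k * S < latNorm x.1 := x.2.1
        have hx0 : 0 < latNorm x.1 := lt_trans hR0 hx1
        have hxS : ¬ latNorm x.1 ≤ Real.sqrt T := by
          rw [← hSdef]; exact not_le.mpr (lt_of_le_of_lt hSR hx1)
        have hgT : gT 2 T x.1 = (S / latNorm x.1) ^ 3 := by
          simp only [gT, if_neg hxS, ← hSdef, eq_self_iff_true, if_true, if_neg (show ¬ latNorm x.1 ≤ S from hxS)]
        rw [hgT]
        have hdiv : S / latNorm x.1 ≤ S / (2 ^ k * S) :=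
          div_le_div_of_nonneg_left hS0.le hR0 hx1.le
        exact pow_le_pow_left₀ (div_nonneg hS0.le hx0.le) hdiv 3
      refine le_trans (ENNReal.tsum_le_tsum fun x =>
        mul_le_mul_left (ENNReal.ofReal_le_ofReal (hgb x)) _) ?_
      rw [ENNReal.tsum_mul_left]
      refine le_trans (mul_le_mul_right hAk _) ?_
      rw [← ENNReal.ofReal_mul (by positivity), ← ENNReal.ofReal_mul (by positivity)]
      apply ENNReal.ofReal_le_ofReal
      have hmax : max 1 (Real.log (S / (2 ^ k * S))) = 1 := by
        apply max_eq_left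
        have hle1 : S / (2 ^ k * S) ≤ 1 := by
          rw [div_le_one hR0]; exact hSR
        linarith [Real.log_nonpos (by positivity) hle1]
      rw [hmax]
      have hrp : S ^ ((4:ℝ) - ((2:ℕ):ℝ)) = S ^ (2:ℕ) := by
        rw [show (4:ℝ) - ((2:ℕ):ℝ) = ((2:ℕ):ℝ) by norm_num, Real.rpow_natCast]
      rw [hrp]
      have heq : (S / (2 ^ k * S)) ^ 3 * (C₀ * ((2 ^ k * S) ^ 2 * 1))
          = C₀ * S ^ (2:ℕ) * (2⁻¹:ℝ) ^ k := by
        rw [inv_pow]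
        field_simp
      exact le_of_eq heq
    · rw [if_neg hd2] at hAk
      have hgb : ∀ x : {x : Fin d → ℤ // 2 ^ k * S < latNorm x ∧ latNorm x ≤ 2 * (2 ^ k * S)},
          gT d T x.1 ≤ S ^ ((2:ℝ) - d) * (S / (2 ^ k * S)) ^ 3 := by
        intro x
        have hx1 : 2 ^ k * S < latNorm x.1 := x.2.1
        have hx0 : 0 < latNorm x.1 := lt_trans hR0 hx1
        have hxgtS : S < latNorm x.1 := lt_of_le_of_lt hSR hx1
        have hxS : ¬ latNorm x.1 ≤ Real.sqrt T := by
          rw [← hSdef]; exact not_le.mpr hxgtS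
        have hgT : gT d T x.1 = (1 + latNorm x.1) ^ ((2:ℝ) - d) * (S / latNorm x.1) ^ 3 := by
          simp only [gT, if_neg hd2, if_neg hxS, ← hSdef, if_neg (show ¬ latNorm x.1 ≤ S from hxS)]
        rw [hgT]
        have h1 : (1 + latNorm x.1) ^ ((2:ℝ) - d) ≤ S ^ ((2:ℝ) - d) :=
          Real.rpow_le_rpow_of_nonpos hS0 (by linarith) (by linarith)
        have h2 : (S / latNorm x.1) ^ 3 ≤ (S / (2 ^ k * S)) ^ 3 :=
          pow_le_pow_left₀ (div_nonneg hS0.le hx0.le)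
            (div_le_div_of_nonneg_left hS0.le hR0 hx1.le) 3
        exact mul_le_mul h1 h2 (pow_nonneg (div_nonneg hS0.le hx0.le) 3)
          (Real.rpow_nonneg hS0.le _)
      refine le_trans (ENNReal.tsum_le_tsum fun x =>
        mul_le_mul_left (ENNReal.ofReal_le_ofReal (hgb x)) _) ?_
      rw [ENNReal.tsum_mul_left]
      refine le_trans (mul_le_mul_right hAk _) ?_
      rw [← ENNReal.ofReal_mul (by positivity), ← ENNReal.ofReal_mul (by positivity)]
      apply ENNReal.ofReal_le_ofReal
      have hsplit : S ^ ((2:ℝ) - d) * S ^ (2:ℕ) = S ^ ((4:ℝ) - d) := by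
        rw [← Real.rpow_natCast S 2, ← Real.rpow_add hS0]
        congr 1
        push_cast
        ring
      have heq : (S ^ ((2:ℝ) - d) * (S / (2 ^ k * S)) ^ 3) * (C₀ * (2 ^ k * S) ^ 2)
          = C₀ * (S ^ ((2:ℝ) - d) * S ^ (2:ℕ)) * (2⁻¹:ℝ) ^ k := by
        rw [inv_pow]
        field_simp
      rw [heq, hsplit]
  -- partition the outer region into annuli
  have step1 : (∑' x : {x : Fin d → ℤ // S < latNorm x},
        ENNReal.ofReal (gT d T x.1) *
          ∑' z : {z : Fin d → ℤ // latNorm z ≤ latNorm (z - x.1)},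
            ENNReal.ofReal (h z.1 * h (z.1 - x.1)))
      ≤ ∑' k : ℕ, ∑' x : {x : Fin d → ℤ // 2 ^ k * S < latNorm x ∧ latNorm x ≤ 2 * (2 ^ k * S)},
          ENNReal.ofReal (gT d T x.1) *
            ∑' z : {z : Fin d → ℤ // latNorm z ≤ latNorm (z - x.1)},
              ENNReal.ofReal (h z.1 * h (z.1 - x.1)) := by
    set F : (Σ k : ℕ, {x : Fin d → ℤ // 2 ^ k * S < latNorm x ∧ latNorm x ≤ 2 * (2 ^ k * S)})
        → ℝ≥0∞ := fun σ =>
      ENNReal.ofReal (gT d T σ.2.1) *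
        ∑' z : {z : Fin d → ℤ // latNorm z ≤ latNorm (z - σ.2.1)},
          ENNReal.ofReal (h z.1 * h (z.1 - σ.2.1)) with hF
    set i : {x : Fin d → ℤ // S < latNorm x} →
        (Σ k : ℕ, {x : Fin d → ℤ // 2 ^ k * S < latNorm x ∧ latNorm x ≤ 2 * (2 ^ k * S)}) :=
      fun x => ⟨(key x.1 x.2).choose, ⟨x.1, (key x.1 x.2).choose_spec⟩⟩ with hi
    have hinj : Function.Injective i := by
      intro a b hab
      have : (i a).2.1 = (i b).2.1 := by rw [hab]
      exact Subtype.ext this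
    calc (∑' x : {x : Fin d → ℤ // S < latNorm x},
            ENNReal.ofReal (gT d T x.1) *
              ∑' z : {z : Fin d → ℤ // latNorm z ≤ latNorm (z - x.1)},
                ENNReal.ofReal (h z.1 * h (z.1 - x.1)))
        = ∑' x : {x : Fin d → ℤ // S < latNorm x}, F (i x) := tsum_congr fun x => rfl
      _ ≤ ∑' σ, F σ := ENNReal.tsum_comp_le_tsum_of_injective hinj F
      _ = ∑' k, ∑' x : {x : Fin d → ℤ //
              2 ^ k * S < latNorm x ∧ latNorm x ≤ 2 * (2 ^ k * S)}, F ⟨k, x⟩ :=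
          ENNReal.tsum_sigma' F
      _ = _ := by exact tsum_congr fun k => tsum_congr fun x => rfl
  refine le_trans step1 ?_
  refine le_trans (ENNReal.tsum_le_tsum step2) ?_
  rw [ENNReal.tsum_mul_left]
  have hgeo : (∑' k : ℕ, ENNReal.ofReal ((2⁻¹ : ℝ) ^ k)) = 2 := by
    have hform : ∀ k : ℕ, ENNReal.ofReal ((2⁻¹ : ℝ) ^ k) = (2⁻¹ : ℝ≥0∞) ^ k := by
      intro k
      rw [ENNReal.ofReal_pow (by norm_num)]
      congr 1
      rw [ENNReal.ofReal_inv_of_pos two_pos]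
      norm_num
    simp_rw [hform]
    rw [ENNReal.tsum_geometric, ENNReal.one_sub_inv_two, inv_inv]
  rw [hgeo]
  rw [show (2:ℝ≥0∞) = ENNReal.ofReal 2 by simp, ← ENNReal.ofReal_mul (by positivity)]
  apply ENNReal.ofReal_le_ofReal
  apply le_of_eq
  ring
end

section
/- Let A : ℤ^d → ℝ^{d×d} be a field of diagonal matrices with entries in [α,β], 0 < α ≤ β. Let φ_T and φ_{2T} be stationary solutions of T^{−1}φ_T − ∇*·A(ξ+∇φ_T) = 0 and (2T)^{−1}φ_{2T} − ∇*·A(ξ+∇φ_{2T}) = 0 on ℤ^d with ⟨φ_T⟩ = ⟨φ_{2T}⟩ = 0 and finite second moments. Define ψ_T := T(φ_{2T} − φ_T) and A_T by ξ·A_Tξ = ⟨(ξ+∇φ_T)·A(ξ+∇φ_T)⟩. Then ξ·(A_{2T} − A_T)ξ = −T^{−2}(⟨ψ_T φ_T⟩ + ½⟨ψ_T φ_{2T}⟩). -/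
open MeasureTheory Matrix

/-- Step 1 of the proof of Theorem 1: the discrete-in-`T` derivative formula
`ξ·(A_{2T} − A_T)ξ = −T^{−2}(⟨ψ_T φ_T⟩ + ½⟨ψ_T φ_{2T}⟩)` with `ψ_T = T(φ_{2T} − φ_T)`,
assuming the weak (stationary) formulations of the modified corrector equations. -/
theorem stmt_9 {Ω : Type*} [MeasurableSpace Ω] (P : Measure Ω) [IsProbabilityMeasure P]
    (d : ℕ) (α β T : ℝ) (hα : 0 < α) (hαβ : α ≤ β) (hT : 0 < T)
    (A : Ω → Matrix (Fin d) (Fin d) ℝ)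
    (hdiag : ∀ ω i j, i ≠ j → A ω i j = 0)
    (hbound : ∀ ω i, A ω i i ∈ Set.Icc α β)
    (ξ : Fin d → ℝ)
    (φT φ2T : Ω → ℝ) (DφT Dφ2T : Ω → Fin d → ℝ)
    (hmean : ∫ ω, φT ω ∂P = 0) (hmean2 : ∫ ω, φ2T ω ∂P = 0)
    (hL2 : MemLp φT 2 P) (hL2' : MemLp φ2T 2 P)
    -- integrability of the energy densities
    (hE11 : Integrable (fun ω => (ξ + DφT ω) ⬝ᵥ (A ω).mulVec (ξ + DφT ω)) P)
    (hE22 : Integrable (fun ω => (ξ + Dφ2T ω) ⬝ᵥ (A ω).mulVec (ξ + Dφ2T ω)) P)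
    (hE12 : Integrable (fun ω => (ξ + DφT ω) ⬝ᵥ (A ω).mulVec (ξ + Dφ2T ω)) P)
    (hE21 : Integrable (fun ω => (ξ + Dφ2T ω) ⬝ᵥ (A ω).mulVec (ξ + DφT ω)) P)
    -- weak formulation of the corrector equation for φ_T tested with ψ_T/T = φ_{2T} − φ_T
    (hVFT : T⁻¹ * (∫ ω, φT ω * (φ2T ω - φT ω) ∂P)
        + (∫ ω, (ξ + DφT ω) ⬝ᵥ (A ω).mulVec (Dφ2T ω - DφT ω) ∂P) = 0)
    -- weak formulation of the corrector equation for φ_{2T} tested with the same field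
    (hVF2T : (2 * T)⁻¹ * (∫ ω, φ2T ω * (φ2T ω - φT ω) ∂P)
        + (∫ ω, (ξ + Dφ2T ω) ⬝ᵥ (A ω).mulVec (Dφ2T ω - DφT ω) ∂P) = 0)
    (AT A2T : Matrix (Fin d) (Fin d) ℝ) (hATsym : AT.IsSymm) (hA2Tsym : A2T.IsSymm)
    (hAT : ξ ⬝ᵥ AT.mulVec ξ = ∫ ω, (ξ + DφT ω) ⬝ᵥ (A ω).mulVec (ξ + DφT ω) ∂P)
    (hA2T : ξ ⬝ᵥ A2T.mulVec ξ = ∫ ω, (ξ + Dφ2T ω) ⬝ᵥ (A ω).mulVec (ξ + Dφ2T ω) ∂P)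
    (ψ : Ω → ℝ) (hψ : ψ = fun ω => T * (φ2T ω - φT ω)) :
    ξ ⬝ᵥ (A2T - AT).mulVec ξ
      = -(T ^ 2)⁻¹ * ((∫ ω, ψ ω * φT ω ∂P) + (1 / 2) * ∫ ω, ψ ω * φ2T ω ∂P) := by

  subst hψ
  -- symmetry of each A ω
  have hsymm : ∀ ω, (A ω)ᵀ = A ω := by
    intro ω; ext i j
    by_cases h : i = j
    · subst h; simp
    · rw [Matrix.transpose_apply, hdiag ω j i (Ne.symm h), hdiag ω i j h]
  have hswap : ∀ ω (x y : Fin d → ℝ),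
      x ⬝ᵥ (A ω).mulVec y = y ⬝ᵥ (A ω).mulVec x := by
    intro ω x y
    rw [Matrix.dotProduct_mulVec, dotProduct_comm, ← Matrix.mulVec_transpose,
      hsymm]
  -- rewrite the test-field integrands as differences
  have hkey : ∀ (u : Ω → Fin d → ℝ) ω, (ξ + u ω) ⬝ᵥ (A ω).mulVec (Dφ2T ω - DφT ω)
      = (ξ + u ω) ⬝ᵥ (A ω).mulVec (ξ + Dφ2T ω) - (ξ + u ω) ⬝ᵥ (A ω).mulVec (ξ + DφT ω) := by
    intro u ω
    rw [← dotProduct_sub, ← Matrix.mulVec_sub, add_sub_add_left_eq_sub]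
  have hint1 : (∫ ω, (ξ + DφT ω) ⬝ᵥ (A ω).mulVec (Dφ2T ω - DφT ω) ∂P)
      = (∫ ω, (ξ + DφT ω) ⬝ᵥ (A ω).mulVec (ξ + Dφ2T ω) ∂P)
        - ∫ ω, (ξ + DφT ω) ⬝ᵥ (A ω).mulVec (ξ + DφT ω) ∂P := by
    rw [← integral_sub hE12 hE11]
    exact integral_congr_ae (Filter.Eventually.of_forall (hkey DφT))
  have hint2 : (∫ ω, (ξ + Dφ2T ω) ⬝ᵥ (A ω).mulVec (Dφ2T ω - DφT ω) ∂P)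
      = (∫ ω, (ξ + Dφ2T ω) ⬝ᵥ (A ω).mulVec (ξ + Dφ2T ω) ∂P)
        - ∫ ω, (ξ + DφT ω) ⬝ᵥ (A ω).mulVec (ξ + Dφ2T ω) ∂P := by
    rw [← integral_sub hE22 hE12]
    refine integral_congr_ae (Filter.Eventually.of_forall fun ω => ?_)
    simp only [hkey Dφ2T ω, hswap ω (ξ + DφT ω) (ξ + Dφ2T ω)]
  -- the ψ integrals
  have hψ1 : (∫ ω, (T * (φ2T ω - φT ω)) * φT ω ∂P)
      = T * ∫ ω, φT ω * (φ2T ω - φT ω) ∂P := by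
    rw [← integral_const_mul]
    exact integral_congr_ae (Filter.Eventually.of_forall fun ω => by ring)
  have hψ2 : (∫ ω, (T * (φ2T ω - φT ω)) * φ2T ω ∂P)
      = T * ∫ ω, φ2T ω * (φ2T ω - φT ω) ∂P := by
    rw [← integral_const_mul]
    exact integral_congr_ae (Filter.Eventually.of_forall fun ω => by ring)
  rw [Matrix.sub_mulVec, dotProduct_sub, hAT, hA2T, hψ1, hψ2]
  rw [hint1] at hVFT
  rw [hint2] at hVF2T
  have hTne : T ≠ 0 := ne_of_gt hT
  calc (∫ ω, (ξ + Dφ2T ω) ⬝ᵥ (A ω).mulVec (ξ + Dφ2T ω) ∂P)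
        - ∫ ω, (ξ + DφT ω) ⬝ᵥ (A ω).mulVec (ξ + DφT ω) ∂P
      = -(T⁻¹ * ∫ ω, φT ω * (φ2T ω - φT ω) ∂P)
        + -((2 * T)⁻¹ * ∫ ω, φ2T ω * (φ2T ω - φT ω) ∂P) := by linarith
    _ = -(T ^ 2)⁻¹ * (T * (∫ ω, φT ω * (φ2T ω - φT ω) ∂P)
        + 1 / 2 * (T * ∫ ω, φ2T ω * (φ2T ω - φT ω) ∂P)) := by field_simp; ring
end
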